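/- Let Q(z) = a₀z⁴ + a₁z³ + a₂z² + a₃z + a₄ be a polynomial of degree 4 with real coefficients and a₀ > 0. Then all complex roots of Q have negative real part (Q is stable) if and only if a₂ > 0, a₃ > 0, a₄ > 0, and Δ₃ := a₁a₂a₃ − a₁²a₄ − a₀a₃² > 0. -/

import Mathlib

open Polynomial

lemma exists_root4 (b₀ b₁ b₂ b₃ b₄ : ℂ) (h : b₀ ≠ 0) :
    ∃ z : ℂ, b₀*z^4 + b₁*z^3 + b₂*z^2 + b₃*z + b₄ = 0 := by
  have hd : (C b₀*X^4 + C b₁*X^3 + C b₂*X^2 + C b₃*X + C b₄).degree = 4 := by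
    compute_degree!
  obtain ⟨z, hz⟩ := Complex.exists_root (f := C b₀*X^4 + C b₁*X^3 + C b₂*X^2 + C b₃*X + C b₄)
    (by rw [hd]; norm_num)
  exact ⟨z, by simpa [Polynomial.IsRoot, eval_add, eval_mul, eval_pow] using hz⟩

lemma exists_root3 (b₀ b₁ b₂ b₃ : ℂ) (h : b₀ ≠ 0) :
    ∃ z : ℂ, b₀*z^3 + b₁*z^2 + b₂*z + b₃ = 0 := by
  have hd : (C b₀*X^3 + C b₁*X^2 + C b₂*X + C b₃).degree = 3 := by
    compute_degree!
  obtain ⟨z, hz⟩ := Complex.exists_root (f := C b₀*X^3 + C b₁*X^2 + C b₂*X + C b₃)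
    (by rw [hd]; norm_num)
  exact ⟨z, by simpa [Polynomial.IsRoot, eval_add, eval_mul, eval_pow] using hz⟩

lemma quad_of_root (z : ℂ) :
    z^2 + ((-2*z.re : ℝ) : ℂ)*z + ((z.re^2 + z.im^2 : ℝ) : ℂ) = 0 := by
  apply Complex.ext <;>
    simp [pow_two, Complex.mul_re, Complex.mul_im, Complex.add_re, Complex.add_im] <;> ring

lemma lin_zero {A B : ℝ} {z : ℂ} (him : z.im ≠ 0) (h : (A:ℂ)*z + (B:ℂ) = 0) :
    A = 0 ∧ B = 0 := by
  have h1 : ((A:ℂ)*z + (B:ℂ)).im = 0 := by rw [h]; simp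
  have h2 : ((A:ℂ)*z + (B:ℂ)).re = 0 := by rw [h]; simp
  simp [Complex.mul_im, Complex.mul_re] at h1 h2
  have hA : A = 0 := by
    rcases h1 with h | h
    · exact h
    · exact absurd h him
  exact ⟨hA, by rw [hA] at h2; simpa using h2⟩


lemma quartic_factor (a₀ a₁ a₂ a₃ a₄ : ℝ) (ha : a₀ ≠ 0) :
    ∃ p q r s : ℝ, ∀ z : ℂ,
      (a₀:ℂ)*z^4 + (a₁:ℂ)*z^3 + (a₂:ℂ)*z^2 + (a₃:ℂ)*z + (a₄:ℂ)
        = (a₀:ℂ) * (z^2 + (p:ℂ)*z + (q:ℂ)) * (z^2 + (r:ℂ)*z + (s:ℂ)) := by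
  have haC : (a₀:ℂ) ≠ 0 := by exact_mod_cast ha
  obtain ⟨z₁, hz₁⟩ := exists_root4 (a₀:ℂ) a₁ a₂ a₃ a₄ haC
  rcases eq_or_ne z₁.im 0 with him1 | him1
  · -- z₁ is real: peel a linear factor
    have hz₁x : z₁ = ((z₁.re : ℝ):ℂ) := Complex.ext rfl (by simpa using him1)
    set x : ℝ := z₁.re with hxdef
    rw [hz₁x] at hz₁
    have hcubicfac : ∀ z : ℂ, (a₀:ℂ)*z^4 + (a₁:ℂ)*z^3 + (a₂:ℂ)*z^2 + (a₃:ℂ)*z + (a₄:ℂ)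
        = (z - (x:ℂ)) * ((a₀:ℂ)*z^3 + ((a₁ + a₀*x : ℝ):ℂ)*z^2
            + ((a₂ + (a₁ + a₀*x)*x : ℝ):ℂ)*z + ((a₃ + (a₂ + (a₁ + a₀*x)*x)*x : ℝ):ℂ)) := by
      intro z
      push_cast
      linear_combination hz₁
    obtain ⟨z₂, hz₂⟩ := exists_root3 (a₀:ℂ) ((a₁ + a₀*x : ℝ):ℂ) ((a₂ + (a₁ + a₀*x)*x : ℝ):ℂ)
      ((a₃ + (a₂ + (a₁ + a₀*x)*x)*x : ℝ):ℂ) haC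
    rcases eq_or_ne z₂.im 0 with him2 | him2
    · -- z₂ real too
      have hz₂y : z₂ = ((z₂.re : ℝ):ℂ) := Complex.ext rfl (by simpa using him2)
      set y : ℝ := z₂.re with hydef
      rw [hz₂y] at hz₂
      refine ⟨-(x+y), x*y, ((a₁ + a₀*x) + a₀*y)/a₀,
        ((a₂ + (a₁ + a₀*x)*x) + ((a₁ + a₀*x) + a₀*y)*y)/a₀, ?_⟩
      intro z
      rw [hcubicfac z]
      have step1 : (a₀:ℂ)*z^3 + ((a₁ + a₀*x : ℝ):ℂ)*z^2 + ((a₂ + (a₁ + a₀*x)*x : ℝ):ℂ)*z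
            + ((a₃ + (a₂ + (a₁ + a₀*x)*x)*x : ℝ):ℂ)
          = (z - (y:ℂ)) * ((a₀:ℂ)*z^2 + (((a₁ + a₀*x) + a₀*y : ℝ):ℂ)*z
            + (((a₂ + (a₁ + a₀*x)*x) + ((a₁ + a₀*x) + a₀*y)*y : ℝ):ℂ)) := by
        push_cast at hz₂ ⊢
        linear_combination hz₂
      rw [step1]
      push_cast
      field_simp
      ring
    · -- z₂ not real: conjugate pair inside the cubic
      have hquad : z₂^2 + ((-2*z₂.re : ℝ):ℂ)*z₂ + ((z₂.re^2 + z₂.im^2 : ℝ):ℂ) = 0 :=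
        quad_of_root z₂
      set p : ℝ := -2*z₂.re with hpdef
      set q : ℝ := z₂.re^2 + z₂.im^2 with hqdef
      have key3 : ∀ z : ℂ, (a₀:ℂ)*z^3 + ((a₁ + a₀*x : ℝ):ℂ)*z^2 + ((a₂ + (a₁ + a₀*x)*x : ℝ):ℂ)*z
            + ((a₃ + (a₂ + (a₁ + a₀*x)*x)*x : ℝ):ℂ)
          = (z^2 + (p:ℂ)*z + (q:ℂ)) * ((a₀:ℂ)*z + (((a₁ + a₀*x) - a₀*p : ℝ):ℂ))
            + ((((a₂ + (a₁ + a₀*x)*x) - ((a₁ + a₀*x) - a₀*p)*p - a₀*q : ℝ):ℂ)*z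
               + (((a₃ + (a₂ + (a₁ + a₀*x)*x)*x) - ((a₁ + a₀*x) - a₀*p)*q : ℝ):ℂ)) := by
        intro z
        push_cast
        ring
      have hAB : ((((a₂ + (a₁ + a₀*x)*x) - ((a₁ + a₀*x) - a₀*p)*p - a₀*q : ℝ)):ℂ)*z₂
          + ((((a₃ + (a₂ + (a₁ + a₀*x)*x)*x) - ((a₁ + a₀*x) - a₀*p)*q : ℝ)):ℂ) = 0 := by
        linear_combination hz₂ - key3 z₂ - ((a₀:ℂ)*z₂ + (((a₁ + a₀*x) - a₀*p : ℝ):ℂ)) * hquad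
      obtain ⟨hA0, hB0⟩ := lin_zero him2 hAB
      refine ⟨p, q, (((a₁ + a₀*x) - a₀*p) - a₀*x)/a₀, -(x*((a₁ + a₀*x) - a₀*p))/a₀, ?_⟩
      intro z
      rw [hcubicfac z, key3 z, hA0, hB0]
      push_cast
      field_simp
      ring
  · -- z₁ not real: conjugate pair divides the quartic directly
    have hquad : z₁^2 + ((-2*z₁.re : ℝ):ℂ)*z₁ + ((z₁.re^2 + z₁.im^2 : ℝ):ℂ) = 0 :=
      quad_of_root z₁
    set p : ℝ := -2*z₁.re with hpdef
    set q : ℝ := z₁.re^2 + z₁.im^2 with hqdef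
    set r : ℝ := (a₁ - a₀*p)/a₀ with hrdef
    set s : ℝ := (a₂ - a₀*q - a₀*p*r)/a₀ with hsdef
    have hrC : (a₀:ℂ)*(r:ℝ) = (a₁:ℂ) - (a₀:ℂ)*(p:ℝ) := by
      rw [hrdef]; push_cast; field_simp
    have hsC : (a₀:ℂ)*(s:ℝ) = (a₂:ℂ) - (a₀:ℂ)*(q:ℝ) - (a₀:ℂ)*(p:ℝ)*(r:ℝ) := by
      rw [hsdef]; push_cast; field_simp; try ring
    have key : ∀ z : ℂ, (a₀:ℂ)*z^4 + (a₁:ℂ)*z^3 + (a₂:ℂ)*z^2 + (a₃:ℂ)*z + (a₄:ℂ)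
        = (a₀:ℂ) * (z^2 + (p:ℂ)*z + (q:ℂ)) * (z^2 + (r:ℂ)*z + (s:ℂ))
          + (((a₃ - a₀*(p*s+q*r) : ℝ):ℂ)*z + ((a₄ - a₀*(q*s) : ℝ):ℂ)) := by
      intro z
      push_cast
      linear_combination (-(z^3) : ℂ) * hrC - (z^2 : ℂ) * hsC
    have hAB : ((a₃ - a₀*(p*s+q*r) : ℝ):ℂ)*z₁ + ((a₄ - a₀*(q*s) : ℝ):ℂ) = 0 := by
      linear_combination hz₁ - key z₁
        - ((a₀:ℂ) * (z₁^2 + (r:ℂ)*z₁ + (s:ℂ))) * hquad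
    obtain ⟨hA0, hB0⟩ := lin_zero him1 hAB
    refine ⟨p, q, r, s, ?_⟩
    intro z
    rw [key z, hA0, hB0]
    push_cast
    ring

lemma lc_algebra (a₀ p q r s : ℝ) (ha : 0 < a₀) :
    (0 < p ∧ 0 < q ∧ 0 < r ∧ 0 < s) ↔
      (0 < a₀*(q+s+p*r) ∧ 0 < a₀*(p*s+q*r) ∧ 0 < a₀*(q*s) ∧
        0 < (a₀*(p+r)) * (a₀*(q+s+p*r)) * (a₀*(p*s+q*r))
            - (a₀*(p+r))^2 * (a₀*(q*s)) - a₀*(a₀*(p*s+q*r))^2) := by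
  constructor
  · rintro ⟨hp, hq, hr, hs⟩
    refine ⟨by positivity, by positivity, by positivity, ?_⟩
    have hD : (a₀*(p+r)) * (a₀*(q+s+p*r)) * (a₀*(p*s+q*r))
            - (a₀*(p+r))^2 * (a₀*(q*s)) - a₀*(a₀*(p*s+q*r))^2
        = a₀^3 * (p*r*((p+r)*(p*s+q*r) + (q-s)^2)) := by ring
    rw [hD]
    have h1 : 0 < (p+r)*(p*s+q*r) := by positivity
    have h2 : 0 < (p+r)*(p*s+q*r) + (q-s)^2 := by nlinarith [sq_nonneg (q-s)]
    positivity
  · rintro ⟨h2, h3, h4, hD⟩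
    have ha3 : (0:ℝ) < a₀^3 := by positivity
    have h2' : 0 < q+s+p*r := by
      rcases mul_pos_iff.mp h2 with ⟨_, h⟩ | ⟨h, _⟩
      · exact h
      · linarith
    have h3' : 0 < p*s+q*r := by
      rcases mul_pos_iff.mp h3 with ⟨_, h⟩ | ⟨h, _⟩
      · exact h
      · linarith
    have h4' : 0 < q*s := by
      rcases mul_pos_iff.mp h4 with ⟨_, h⟩ | ⟨h, _⟩
      · exact h
      · linarith
    have hDD : 0 < p*r*((p+r)*(p*s+q*r) + (q-s)^2) := by
      have hD' : (a₀*(p+r)) * (a₀*(q+s+p*r)) * (a₀*(p*s+q*r))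
            - (a₀*(p+r))^2 * (a₀*(q*s)) - a₀*(a₀*(p*s+q*r))^2
          = a₀^3 * (p*r*((p+r)*(p*s+q*r) + (q-s)^2)) := by ring
      rw [hD'] at hD
      rcases mul_pos_iff.mp hD with ⟨_, h⟩ | ⟨h, _⟩
      · exact h
      · linarith
    -- first: p + r > 0 (else Δ < 0)
    have hDDexp : 0 < (p+r)*((q+s+p*r)*(p*s+q*r)) - (p+r)^2*(q*s) - (p*s+q*r)^2 := by
      nlinarith [hDD]
    have hpr_sum : 0 < p + r := by
      by_contra hcon
      push_neg at hcon
      have t1 : (p+r)*((q+s+p*r)*(p*s+q*r)) ≤ 0 :=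
        mul_nonpos_of_nonpos_of_nonneg hcon (mul_pos h2' h3').le
      have t2 : 0 ≤ (p+r)^2*(q*s) := mul_nonneg (sq_nonneg _) h4'.le
      nlinarith [sq_nonneg (p*s+q*r), mul_pos h3' h3']
    -- q, s > 0
    have hqs : 0 < q ∧ 0 < s := by
      rcases mul_pos_iff.mp h4' with h | ⟨hq, hs⟩
      · exact h
      · exfalso
        have hpr : 0 < p*r := by nlinarith
        have hp : 0 < p := by
          rcases mul_pos_iff.mp hpr with ⟨h, _⟩ | ⟨h, h'⟩
          · exact h
          · linarith
        have hr : 0 < r := by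
          rcases mul_pos_iff.mp hpr with ⟨_, h⟩ | ⟨h, h'⟩
          · exact h
          · linarith
        nlinarith [mul_pos hp hr, mul_neg_of_pos_of_neg hp hs, mul_neg_of_neg_of_pos hq hr]
    obtain ⟨hq, hs⟩ := hqs
    -- now p*r > 0
    have hpr : 0 < p*r := by
      rcases mul_pos_iff.mp hDD with ⟨h, _⟩ | ⟨_, hB⟩
      · exact h
      · exfalso
        nlinarith [sq_nonneg (q-s), mul_pos hpr_sum h3']
    have hp : 0 < p := by
      rcases mul_pos_iff.mp hpr with ⟨h, _⟩ | ⟨h, h'⟩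
      · exact h
      · linarith
    have hr : 0 < r := by
      rcases mul_pos_iff.mp hpr with ⟨_, h⟩ | ⟨h, h'⟩
      · exact h
      · linarith
    exact ⟨hp, hq, hr, hs⟩

lemma quad_stable (p q : ℝ) :
    (∀ z : ℂ, z^2 + (p:ℂ)*z + (q:ℂ) = 0 → z.re < 0) ↔ (0 < p ∧ 0 < q) := by
  constructor
  · intro h
    rcases le_or_gt 0 (p^2 - 4*q) with hd | hd
    · set d := Real.sqrt (p^2 - 4*q) with hdd
      have hd2 : d^2 = p^2 - 4*q := Real.sq_sqrt hd
      have hd0 : 0 ≤ d := Real.sqrt_nonneg _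
      have r1 : ((-p+d)/2 : ℝ)^2 + p*((-p+d)/2) + q = 0 := by nlinarith
      have r2 : ((-p-d)/2 : ℝ)^2 + p*((-p-d)/2) + q = 0 := by nlinarith
      have h1 := h (((-p+d)/2 : ℝ) : ℂ) (by exact_mod_cast congrArg (Complex.ofReal) r1)
      have h2 := h (((-p-d)/2 : ℝ) : ℂ) (by exact_mod_cast congrArg (Complex.ofReal) r2)
      simp only [Complex.ofReal_re] at h1 h2
      constructor <;> nlinarith
    · set t := Real.sqrt (4*q - p^2) with htt
      have ht2 : t^2 = 4*q - p^2 := Real.sq_sqrt (by linarith)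
      have ht2c : ((t:ℂ))^2 = 4*(q:ℂ) - (p:ℂ)^2 := by exact_mod_cast congrArg (Complex.ofReal) ht2
      have hz : (-(p:ℂ)/2 + (t:ℂ)/2 * Complex.I)^2 + (p:ℂ)*(-(p:ℂ)/2 + (t:ℂ)/2 * Complex.I) + (q:ℂ) = 0 := by
        linear_combination ((t:ℂ)^2/4) * Complex.I_sq - (1/4 : ℂ) * ht2c
      have h1 := h _ hz
      simp [Complex.add_re, Complex.div_re] at h1
      have ht0 : 0 < t := Real.sqrt_pos.mpr (by linarith)
      constructor <;> nlinarith
  · rintro ⟨hp, hq⟩ z hz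
    have h1 : (z^2 + (p:ℂ)*z + (q:ℂ)).re = 0 := by rw [hz]; simp
    have h2 : (z^2 + (p:ℂ)*z + (q:ℂ)).im = 0 := by rw [hz]; simp
    simp [pow_two, Complex.mul_re, Complex.mul_im, Complex.add_re, Complex.add_im] at h1 h2
    rcases eq_or_ne z.im 0 with hy | hy
    · rw [hy] at h1; nlinarith
    · have : z.im * (2*z.re + p) = 0 := by nlinarith
      have : 2*z.re + p = 0 := by
        rcases mul_eq_zero.mp this with h | h
        · exact absurd h hy
        · exact h
      linarith

lemma lc_main (a₀ a₁ a₂ a₃ a₄ p q r s : ℝ) (ha : 0 < a₀)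
    (e1 : a₁ = a₀*(p+r)) (e2 : a₂ = a₀*(q+s+p*r))
    (e3 : a₃ = a₀*(p*s+q*r)) (e4 : a₄ = a₀*(q*s)) :
    (0 < p ∧ 0 < q ∧ 0 < r ∧ 0 < s) ↔
      (0 < a₂ ∧ 0 < a₃ ∧ 0 < a₄ ∧ 0 < a₁*a₂*a₃ - a₁^2*a₄ - a₀*a₃^2) := by
  subst e1 e2 e3 e4
  exact lc_algebra a₀ p q r s ha

/-- Liénard–Chipart criterion in degree 4: the real polynomial
`a₀ z⁴ + a₁ z³ + a₂ z² + a₃ z + a₄` (with `a₀ > 0`) is stable (all complex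
roots have negative real part) iff `a₂ > 0`, `a₃ > 0`, `a₄ > 0` and
`Δ₃ = a₁a₂a₃ - a₁²a₄ - a₀a₃² > 0`. -/
theorem degree_four_stability (a₀ a₁ a₂ a₃ a₄ : ℝ) (ha₀ : 0 < a₀) :
    (∀ z : ℂ, (a₀ : ℂ) * z ^ 4 + (a₁ : ℂ) * z ^ 3 + (a₂ : ℂ) * z ^ 2 +
        (a₃ : ℂ) * z + (a₄ : ℂ) = 0 → z.re < 0) ↔
      (0 < a₂ ∧ 0 < a₃ ∧ 0 < a₄ ∧
        0 < a₁ * a₂ * a₃ - a₁ ^ 2 * a₄ - a₀ * a₃ ^ 2) := by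
  obtain ⟨p, q, r, s, hfac⟩ := quartic_factor a₀ a₁ a₂ a₃ a₄ (ne_of_gt ha₀)
  have haC : (a₀:ℂ) ≠ 0 := by exact_mod_cast (ne_of_gt ha₀)
  have hR : ∀ x : ℝ, a₀*x^4 + a₁*x^3 + a₂*x^2 + a₃*x + a₄
      = a₀*(x^2+p*x+q)*(x^2+r*x+s) := by
    intro x
    have h : ((a₀*x^4 + a₁*x^3 + a₂*x^2 + a₃*x + a₄ : ℝ):ℂ)
        = ((a₀*(x^2+p*x+q)*(x^2+r*x+s) : ℝ):ℂ) := by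
      push_cast
      linear_combination hfac (x:ℂ)
    exact_mod_cast h
  have e1 : a₁ = a₀*(p+r) := by
    linear_combination (1/12)*hR 2 - (1/12)*hR (-2) - (1/6)*hR 1 + (1/6)*hR (-1)
  have e2 : a₂ = a₀*(q+s+p*r) := by
    linear_combination (2/3)*hR 1 + (2/3)*hR (-1) - (1/24)*hR 2 - (1/24)*hR (-2) - (5/4)*hR 0
  have e3 : a₃ = a₀*(p*s+q*r) := by
    linear_combination (2/3)*hR 1 - (2/3)*hR (-1) - (1/12)*hR 2 + (1/12)*hR (-2)
  have e4 : a₄ = a₀*(q*s) := by linear_combination hR 0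
  have key : (∀ z : ℂ, (a₀ : ℂ) * z ^ 4 + (a₁ : ℂ) * z ^ 3 + (a₂ : ℂ) * z ^ 2 +
        (a₃ : ℂ) * z + (a₄ : ℂ) = 0 → z.re < 0) ↔
      ((∀ z : ℂ, z^2 + (p:ℂ)*z + (q:ℂ) = 0 → z.re < 0) ∧
       (∀ z : ℂ, z^2 + (r:ℂ)*z + (s:ℂ) = 0 → z.re < 0)) := by
    constructor
    · intro h
      constructor
      · intro z hz
        exact h z (by rw [hfac z, hz]; ring)
      · intro z hz
        exact h z (by rw [hfac z, hz]; ring)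
    · rintro ⟨h1, h2⟩ z hz
      rw [hfac z] at hz
      rcases mul_eq_zero.mp hz with h | h
      · rcases mul_eq_zero.mp h with h | h
        · exact absurd h haC
        · exact h1 z h
      · exact h2 z h
  rw [key, quad_stable p q, quad_stable r s]
  have hiff := lc_main a₀ a₁ a₂ a₃ a₄ p q r s ha₀ e1 e2 e3 e4
  tauto
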